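/- Let F be the Leibniz algebra on basis {e_1, e_2, ...} with nonzero products [e_i, e_1] = e_{i+1} for i ≥ 2. The two derivations d_1, d_2 of F given by d_1(e_1) = e_1, d_1(e_i) = (i-2)e_i (i ≥ 2) and d_2(e_1) = 0, d_2(e_i) = e_i (i ≥ 2) are residually nil-independent: for scalars α, β, the map f = α d_1 + β d_2 satisfies ⋂_{k≥1} Im(f^k) = 0 if and only if α = β = 0. -/

import Mathlib

noncomputable section

/-- The underlying space; the basis vector `e_i` (i ≥ 1) is `Finsupp.single (i-1) 1`. -/
abbrev V : Type := ℕ →₀ ℂ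

/-- Shift-up map: `single n ↦ single (n+1)` for `n ≥ 1` (i.e. `e_i ↦ e_{i+1}` for `i ≥ 2`). -/
def sh1 : V →ₗ[ℂ] V :=
  Finsupp.lsum ℂ fun n => if 1 ≤ n then (Finsupp.lsingle (n + 1) : ℂ →ₗ[ℂ] V) else 0

/-- Bracket of the filiform Leibniz algebra `F`: `[e_i, e_1] = e_{i+1}` for `i ≥ 2`. -/
def brF (f g : V) : V := g 0 • sh1 f

/-- `d₁(e_1) = e_1`, `d₁(e_i) = (i-2) e_i` for `i ≥ 2`. -/
def d1 : V →ₗ[ℂ] V :=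
  Finsupp.lsum ℂ fun n =>
    (if n = 0 then (1 : ℂ) else (n : ℂ) - 1) • Finsupp.lsingle n

/-- `d₂(e_1) = 0`, `d₂(e_i) = e_i` for `i ≥ 2`. -/
def d2 : V →ₗ[ℂ] V :=
  Finsupp.lsum ℂ fun n =>
    (if 1 ≤ n then (1 : ℂ) else 0) • Finsupp.lsingle n

lemma sh1_single (n : ℕ) (c : ℂ) :
    sh1 (Finsupp.single n c) = if 1 ≤ n then Finsupp.single (n+1) c else 0 := by
  simp [sh1]
  split <;> simp

lemma d1_single (n : ℕ) (c : ℂ) :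
    d1 (Finsupp.single n c) = (if n = 0 then (1:ℂ) else (n:ℂ)-1) • Finsupp.single n c := by
  rw [d1, Finsupp.lsum_single]
  split <;> simp

lemma d2_single (n : ℕ) (c : ℂ) :
    d2 (Finsupp.single n c) = (if 1 ≤ n then (1:ℂ) else 0) • Finsupp.single n c := by
  rw [d2, Finsupp.lsum_single]
  split <;> simp

lemma d1_apply_zero (v : V) : d1 v 0 = v 0 := by
  induction v using Finsupp.induction_linear with
  | zero => simp
  | add f g hf hg => simp [hf, hg]
  | single n c =>
    rcases Nat.eq_zero_or_pos n with h|h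
    · subst h; simp [d1_single]
    · simp [d1_single, Finsupp.single_apply, h.ne']

lemma d2_apply_zero (v : V) : d2 v 0 = 0 := by
  induction v using Finsupp.induction_linear with
  | zero => simp
  | add f g hf hg => simp [hf, hg]
  | single n c =>
    rcases Nat.eq_zero_or_pos n with h|h
    · subst h; simp [d2_single]
    · have h1 : 1 ≤ n := h
      simp [d2_single, Finsupp.single_apply, h1, h.ne']

lemma d1_sh1 (u : V) : d1 (sh1 u) = sh1 (d1 u) + sh1 u := by
  induction u using Finsupp.induction_linear with
  | zero => simp
  | add f g hf hg => simp only [map_add, hf, hg]; abel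
  | single n c =>
    rcases Nat.eq_zero_or_pos n with h|h
    · subst h; simp [sh1_single, d1_single]
    · have h1 : 1 ≤ n := h
      simp only [sh1_single, d1_single, if_pos h1, map_smul, Nat.succ_ne_zero, if_neg,
        Nat.add_eq_zero, and_false, ite_false, if_neg h.ne']
      push_cast
      module

lemma d2_sh1 (u : V) : d2 (sh1 u) = sh1 (d2 u) := by
  induction u using Finsupp.induction_linear with
  | zero => simp
  | add f g hf hg => simp [hf, hg]
  | single n c =>
    rcases Nat.eq_zero_or_pos n with h|h
    · subst h; simp [sh1_single, d2_single]
    · have h1 : 1 ≤ n := h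
      simp [sh1_single, d2_single, if_pos h1, h1]

def lam (α β : ℂ) (n : ℕ) : ℂ := if n = 0 then α else α * ((n:ℂ)-1) + β

lemma f_single (α β : ℂ) (n : ℕ) :
    (α • d1 + β • d2) (Finsupp.single n (1:ℂ)) = lam α β n • Finsupp.single n 1 := by
  rcases Nat.eq_zero_or_pos n with h|h
  · subst h; simp [d1_single, d2_single, lam]
  · have h1 : 1 ≤ n := h
    simp only [LinearMap.add_apply, LinearMap.smul_apply, d1_single, d2_single,
      if_neg h.ne', if_pos h1, lam, smul_smul]
    rw [← add_smul]
    ring_nf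

lemma f_pow_single (α β : ℂ) (n k : ℕ) :
    ((α • d1 + β • d2)^k) (Finsupp.single n (1:ℂ)) = lam α β n ^ k • Finsupp.single n 1 := by
  induction k with
  | zero => simp
  | succ k ih =>
    rw [pow_succ, Module.End.mul_apply, f_single, map_smul, ih, smul_smul, ← pow_succ']

/-- `d₁` and `d₂` are derivations of `F` and are residually nil-independent:
`f = α d₁ + β d₂` satisfies `⋂_{k ≥ 1} Im (f^k) = 0` iff `α = β = 0`. -/
theorem stmt18 :
    (∀ u v : V, d1 (brF u v) = brF (d1 u) v + brF u (d1 v)) ∧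
    (∀ u v : V, d2 (brF u v) = brF (d2 u) v + brF u (d2 v)) ∧
    (∀ α β : ℂ,
      (⨅ k : ℕ, LinearMap.range ((α • d1 + β • d2) ^ (k + 1))) = ⊥ ↔ α = 0 ∧ β = 0) := by
  refine ⟨?_, ?_, ?_⟩
  · intro u v
    simp only [brF, map_smul, d1_sh1, d1_apply_zero]
    module
  · intro u v
    simp only [brF, map_smul, d2_sh1, d2_apply_zero]
    module
  · intro α β
    constructor
    · intro h
      have key : ∀ n : ℕ, lam α β n = 0 := by
        intro n
        by_contra hn
        have hmem : Finsupp.single n (1:ℂ) ∈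
            (⨅ k : ℕ, LinearMap.range ((α • d1 + β • d2) ^ (k + 1))) := by
          rw [Submodule.mem_iInf]
          intro k
          refine ⟨(lam α β n ^ (k+1))⁻¹ • Finsupp.single n 1, ?_⟩
          rw [map_smul, f_pow_single, smul_smul, inv_mul_cancel₀ (pow_ne_zero _ hn), one_smul]
        rw [h, Submodule.mem_bot] at hmem
        exact one_ne_zero (Finsupp.single_eq_zero.mp hmem)
      have h0 := key 0
      have h1 := key 1
      simp [lam] at h0 h1
      exact ⟨h0, by simpa [h0] using h1⟩
    · rintro ⟨rfl, rfl⟩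
      refine le_antisymm ?_ bot_le
      refine le_trans (iInf_le _ 0) ?_
      simp
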